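/- In BCCSP_D^c with finite data set D, the axiom l.p = Σ_{d ∈ D} update(d, check(d, l.p)) is sound with respect to strong bisimilarity. -/

import Mathlib

def IsBisim {S L : Type*} (Tr : S → L → S → Prop) (R : S → S → Prop) : Prop :=
  Symmetric R ∧
    ∀ p q, R p q → ∀ l p', Tr p l p' → ∃ q', Tr q l q' ∧ R p' q'

def Bisimilar {S L : Type*} (Tr : S → L → S → Prop) (p q : S) : Prop :=
  ∃ R, IsBisim Tr R ∧ R p q

/-- BCCSP_D^c terms over labels `L` and data constants `D`. -/
inductive TD (L D : Type*) where
  | zero : TD L D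
  | pre : L → TD L D → TD L D
  | chk : D → TD L D → TD L D
  | upd : D → TD L D → TD L D
  | plus : TD L D → TD L D → TD L D

/-- The SOS transition relation of BCCSP_D^c, with labels `(d, l, d')`. -/
inductive TD.Tr {L D : Type*} : TD L D → D × L × D → TD L D → Prop where
  | pre (d : D) (l : L) (t : TD L D) : TD.Tr (.pre l t) (d, l, d) t
  | chk {t : TD L D} {d : D} {l : L} {d' : D} {t' : TD L D} :
      TD.Tr t (d, l, d') t' → TD.Tr (.chk d t) (d, l, d') t'
  | upd {t : TD L D} {d : D} {l : L} {d' : D} {t' : TD L D} (e : D) :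
      TD.Tr t (d, l, d') t' → TD.Tr (.upd e t) (d, l, e) t'
  | plusL {s : TD L D} {lab : D × L × D} {s' : TD L D} (t : TD L D) :
      TD.Tr s lab s' → TD.Tr (.plus s t) lab s'
  | plusR {s : TD L D} {lab : D × L × D} {s' : TD L D} (t : TD L D) :
      TD.Tr s lab s' → TD.Tr (.plus t s) lab s'

/-- Iterated binary choice over a list of terms (empty sum is `0`). -/
def TD.sum {L D : Type*} (ts : List (TD L D)) : TD L D :=
  ts.foldr TD.plus TD.zero

lemma sum_tr_iff {L D : Type*} (ts : List (TD L D)) (lab : D × L × D) (t' : TD L D) :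
    TD.Tr (TD.sum ts) lab t' ↔ ∃ s ∈ ts, TD.Tr s lab t' := by
  induction ts with
  | nil =>
    simp only [TD.sum, List.foldr_nil]
    constructor
    · intro h; cases h
    · rintro ⟨s, hs, _⟩; simp at hs
  | cons a ts ih =>
    simp only [TD.sum, List.foldr_cons]
    constructor
    · intro h
      cases h with
      | plusL _ h => exact ⟨a, List.mem_cons_self, h⟩
      | plusR _ h =>
        obtain ⟨s, hs, h⟩ := (ih).mp h
        exact ⟨s, List.mem_cons_of_mem _ hs, h⟩
    · rintro ⟨s, hs, h⟩
      rcases List.mem_cons.mp hs with rfl | hs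
      · exact TD.Tr.plusL _ h
      · exact TD.Tr.plusR _ (ih.mpr ⟨s, hs, h⟩)

theorem prefix_axiom_sound {L D : Type*} [Fintype D] (l : L) (p : TD L D) :
    Bisimilar TD.Tr (TD.pre l p)
      (TD.sum ((Finset.univ : Finset D).toList.map
        (fun d => TD.upd d (TD.chk d (TD.pre l p))))) := by
  set S := TD.sum ((Finset.univ : Finset D).toList.map
      (fun d => TD.upd d (TD.chk d (TD.pre l p)))) with hS
  -- S can do (d, l, d) → p for every d
  have hStr : ∀ d : D, TD.Tr S (d, l, d) p := by
    intro d
    rw [hS, sum_tr_iff]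
    refine ⟨TD.upd d (TD.chk d (TD.pre l p)), ?_, ?_⟩
    · exact List.mem_map.mpr ⟨d, by simp, rfl⟩
    · exact TD.Tr.upd d (TD.Tr.chk (TD.Tr.pre d l p))
  -- every transition of S has this form
  have hSinv : ∀ lab t', TD.Tr S lab t' → ∃ d : D, lab = (d, l, d) ∧ t' = p := by
    intro lab t' h
    rw [hS, sum_tr_iff] at h
    obtain ⟨s, hs, h⟩ := h
    obtain ⟨d, -, rfl⟩ := List.mem_map.mp hs
    cases h with
    | upd e h =>
      cases h with
      | chk h =>
        cases h
        exact ⟨d, rfl, rfl⟩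
  refine ⟨fun x y => (x = TD.pre l p ∧ y = S) ∨ (x = S ∧ y = TD.pre l p) ∨ x = y,
    ⟨?_, ?_⟩, Or.inl ⟨rfl, rfl⟩⟩
  · rintro x y (⟨rfl, rfl⟩ | ⟨rfl, rfl⟩ | rfl) <;> tauto
  · rintro x y (⟨rfl, rfl⟩ | ⟨rfl, rfl⟩ | rfl) lab x' h
    · cases h with
      | pre d => exact ⟨p, hStr d, Or.inr (Or.inr rfl)⟩
    · obtain ⟨d, rfl, h'⟩ := hSinv _ _ h
      exact ⟨p, TD.Tr.pre d l p, Or.inr (Or.inr h')⟩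
    · exact ⟨x', h, Or.inr (Or.inr rfl)⟩
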